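/- Fix a real number c with 0 ≤ c ≤ 1 and set s = √(1−c²). In ℂ² with orthonormal basis |0⟩, |1⟩ let |φ⟩ = c|0⟩ + s|1⟩, and for 1 ≤ k ≤ n let |Ψ_k⟩ ∈ (ℂ²)^{⊗n} be the source state |Ψ_k⟩ = |0⟩^{⊗(k−1)} ⊗ |φ⟩^{⊗(n−k+1)}. Then the Gram matrix of these states is ⟨Ψ_i, Ψ_j⟩ = c^{|i−j|} for all i, j ∈ {1,…,n}. -/

import Mathlib

open BigOperators

/-- the Gram matrix of the change point source states
`|Ψ_k⟩ = |0⟩^{⊗(k−1)} ⊗ |φ⟩^{⊗(n−k+1)}` with `|φ⟩ = c|0⟩ + s|1⟩`, `s = √(1−c²)`, is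
`⟨Ψ_i, Ψ_j⟩ = c^{|i−j|}`.  The tensor product `(ℂ²)^{⊗n}` is realized as the space of
functions `(Fin n → Fin 2) → ℂ`; indices `k : Fin n` are the 0-based versions of the
1-based `k ∈ {1,…,n}`, so positions `j < k` carry `|0⟩` and positions `j ≥ k` carry `|φ⟩`. -/
theorem gram_matrix_of_source_states
    (c : ℝ) (hc0 : 0 ≤ c) (hc1 : c ≤ 1) (s : ℝ) (hs : s = Real.sqrt (1 - c ^ 2))
    (n : ℕ)
    (Ψ : Fin n → (Fin n → Fin 2) → ℂ)
    (hΨ : ∀ (k : Fin n) (f : Fin n → Fin 2),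
      Ψ k f = ∏ j : Fin n,
        (if j < k then (if f j = 0 then (1 : ℂ) else 0)
         else (if f j = 0 then (c : ℂ) else (s : ℂ)))) :
    ∀ i j : Fin n,
      (∑ f : Fin n → Fin 2, (starRingEnd ℂ) (Ψ i f) * Ψ j f) =
        (c : ℂ) ^ Nat.dist i.1 j.1 := by
  intro i j
  have hc2 : (0:ℝ) ≤ 1 - c ^ 2 := by nlinarith
  have hR : c * c + s * s = 1 := by
    have := Real.sq_sqrt hc2
    rw [hs]; nlinarith [Real.sq_sqrt hc2]
  have hcs : (c:ℂ) * c + (s:ℂ) * s = 1 := by exact_mod_cast congrArg (Complex.ofReal) hR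
  set g : Fin n → Fin 2 → ℂ := fun p x =>
      (if p < i then (if x = 0 then (1:ℂ) else 0) else if x = 0 then (c:ℂ) else (s:ℂ)) *
      (if p < j then (if x = 0 then (1:ℂ) else 0) else if x = 0 then (c:ℂ) else (s:ℂ))
    with hg
  have step1 : ∀ f : Fin n → Fin 2, (starRingEnd ℂ) (Ψ i f) * Ψ j f
      = ∏ p : Fin n, g p (f p) := by
    intro f
    rw [hΨ, hΨ, map_prod, ← Finset.prod_mul_distrib]
    refine Finset.prod_congr rfl fun p _ => ?_
    simp only [hg]
    congr 1
    split_ifs <;> simp [Complex.conj_ofReal]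
  simp only [step1]
  rw [show (Finset.univ : Finset (Fin n → Fin 2)) = Fintype.piFinset (fun _ => Finset.univ)
      from (Fintype.piFinset_univ).symm, ← Finset.prod_univ_sum]
  have factor : ∀ p : Fin n, (∑ x : Fin 2, g p x) = if ¬(p < i ↔ p < j) then (c:ℂ) else 1 := by
    intro p
    rw [Fin.sum_univ_two]
    by_cases h1 : p < i <;> by_cases h2 : p < j <;>
      simp [hg, h1, h2, hcs]
  simp only [factor]
  rw [show (∏ p : Fin n, if ¬(p < i ↔ p < j) then (c:ℂ) else 1)
      = ∏ p ∈ Finset.univ.filter (fun p : Fin n => ¬(p < i ↔ p < j)), (c:ℂ)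
      from (Finset.prod_filter _ _).symm, Finset.prod_const]
  congr 1
  have hcard : (Finset.univ.filter (fun p : Fin n => ¬(p < i ↔ p < j))).card
      = (Finset.Ico (min i.1 j.1) (max i.1 j.1)).card := by
    refine Finset.card_bij (fun p _ => p.1) ?_ ?_ ?_
    · intro p hp
      simp only [Finset.mem_filter, Finset.mem_univ, true_and] at hp
      simp only [Finset.mem_Ico, Fin.lt_def] at *
      omega
    · intro a ha b hb h
      exact Fin.val_injective h
    · intro m hm
      simp only [Finset.mem_Ico] at hm
      have hmn : m < n := by
        have := i.2; have := j.2; omega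
      refine ⟨⟨m, hmn⟩, ?_, rfl⟩
      simp only [Finset.mem_filter, Finset.mem_univ, true_and, Fin.lt_def]
      omega
  rw [hcard, Nat.card_Ico]
  simp only [Nat.dist]
  omega
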